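/- Let T be a totally unimodular integer matrix with k rows and n columns such that the cone C = {x ∈ R^n : Tx ≤ 0} is pointed. Let r be an extremal ray of C that is integral and whose coordinates have greatest common divisor 1. Then for every vector d ∈ {-1,0,1}^n such that appending d as a row to T yields a totally unimodular matrix, the inner product d^T r lies in {-1, 0, 1}. -/

import Mathlib

/-- `d` is TU-appendable to `T`: appending `dᵀ` as an extra row keeps the matrix
totally unimodular. -/
def TUAppendable {k n : ℕ} (T : Matrix (Fin k) (Fin n) ℤ) (d : Fin n → ℤ) : Prop :=
  (Matrix.fromRows T (Matrix.of fun (_ : Unit) (j : Fin n) => d j)).IsTotallyUnimodular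

/-- If `T` is TU, the cone `C = {x : Tx ≤ 0}` is pointed, and `r` is an
elementary extremal ray of `C` (integral, with coprime coordinates), then `dᵀ r ∈ {-1,0,1}`
for every vector `d ∈ {-1,0,1}ⁿ` that is TU-appendable to `T`. -/
theorem stmt4 (k n : ℕ) (T : Matrix (Fin k) (Fin n) ℤ) (hT : T.IsTotallyUnimodular)
    (C : Set (Fin n → ℚ))
    (hC : C = {x : Fin n → ℚ | ∀ i : Fin k, (∑ j, (T i j : ℚ) * x j) ≤ 0})
    (hpointed : ∀ x ∈ C, -x ∈ C → x = 0)
    (z : Fin n → ℤ) (hz0 : z ≠ 0)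
    (hzC : (fun j => (z j : ℚ)) ∈ C)
    (hgcd : Finset.univ.gcd (fun j => (z j).natAbs) = 1)
    (hray : ∀ x y : Fin n → ℚ, x ∈ C → y ∈ C → x + y = (fun j => (z j : ℚ)) →
      ∃ a : ℚ, 0 ≤ a ∧ x = a • (fun j => (z j : ℚ)))
    (d : Fin n → ℤ) (hd01 : ∀ j, d j ∈ ({-1, 0, 1} : Set ℤ)) (hd : TUAppendable T d) :
    dotProduct d z ∈ ({-1, 0, 1} : Set ℤ) := by
  classical
  subst hC
  set α : ℤ := dotProduct d z with hαdef
  by_cases hα0 : α = 0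
  · right; left; exact hα0
  -- zq : the ray over ℚ
  set zq : Fin n → ℚ := fun j => (z j : ℚ) with hzqdef
  have hzCq : ∀ i : Fin k, (∑ j, (T i j : ℚ) * zq j) ≤ 0 := hzC
  -- Step A : any vector satisfying all tight constraints with equality is a multiple of zq
  have expand : ∀ (c : ℚ) (x : Fin n → ℚ) (i : Fin k),
      ∑ j, (T i j : ℚ) * (zq j + c * x j)
        = (∑ j, (T i j : ℚ) * zq j) + c * ∑ j, (T i j : ℚ) * x j := by
    intro c x i
    rw [Finset.mul_sum, ← Finset.sum_add_distrib]
    exact Finset.sum_congr rfl fun j _ => by ring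
  have stepA : ∀ x : Fin n → ℚ,
      (∀ i : Fin k, (∑ j, (T i j : ℚ) * zq j) = 0 → (∑ j, (T i j : ℚ) * x j) = 0) →
      ∃ c : ℚ, x = c • zq := by
    intro x hx
    set F : Finset (Fin k) :=
      Finset.univ.filter (fun i => (∑ j, (T i j : ℚ) * zq j) ≠ 0) with hF
    set f : Fin k → ℚ :=
      fun i => (-(∑ j, (T i j : ℚ) * zq j)) / (|∑ j, (T i j : ℚ) * x j| + 1) with hf
    have hfpos : ∀ i ∈ F, 0 < f i := by
      intro i hi
      have hne := (Finset.mem_filter.mp hi).2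
      have hlt : ∑ j, (T i j : ℚ) * zq j < 0 := lt_of_le_of_ne (hzCq i) hne
      have h1 : (0:ℚ) < |∑ j, (T i j : ℚ) * x j| + 1 := by positivity
      exact div_pos (by linarith) h1
    obtain ⟨ε, hε0, hεb⟩ : ∃ ε : ℚ, 0 < ε ∧ ∀ i ∈ F, ε ≤ f i := by
      by_cases hFe : F.Nonempty
      · exact ⟨F.inf' hFe f, (Finset.lt_inf'_iff hFe).mpr (fun i hi => hfpos i hi),
          fun i hi => Finset.inf'_le f hi⟩
      · exact ⟨1, one_pos, fun i hi => absurd ⟨i, hi⟩ hFe⟩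
    have hmem : ∀ c : ℚ, |c| ≤ ε → ∀ i : Fin k,
        ∑ j, (T i j : ℚ) * (zq j + c * x j) ≤ 0 := by
      intro c hc i
      rw [expand]
      by_cases hzero : (∑ j, (T i j : ℚ) * zq j) = 0
      · rw [hx i hzero, hzero]; simp
      · have hiF : i ∈ F := Finset.mem_filter.mpr ⟨Finset.mem_univ i, hzero⟩
        have hsneg : (∑ j, (T i j : ℚ) * zq j) < 0 := lt_of_le_of_ne (hzCq i) hzero
        have hεf := hεb i hiF
        set s : ℚ := ∑ j, (T i j : ℚ) * zq j with hs
        set t : ℚ := ∑ j, (T i j : ℚ) * x j with ht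
        have hpos : (0:ℚ) < |t| + 1 := by positivity
        have h2 : ε * (|t| + 1) ≤ -s := by
          have := (le_div_iff₀ hpos).mp hεf
          linarith
        have h3 : c * t ≤ |c| * |t| := by
          calc c * t ≤ |c * t| := le_abs_self _
          _ = |c| * |t| := abs_mul c t
        nlinarith [abs_nonneg t, abs_nonneg c,
          mul_le_mul_of_nonneg_right hc (abs_nonneg t)]
    have hhalf : ∀ (w : Fin n → ℚ), (∀ i, ∑ j, (T i j : ℚ) * w j ≤ 0) →
        ∀ i, ∑ j, (T i j : ℚ) * ((1/2 : ℚ) * w j) ≤ 0 := by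
      intro w hw i
      have hq : ∑ j, (T i j : ℚ) * ((1/2 : ℚ) * w j)
          = (1/2 : ℚ) * ∑ j, (T i j : ℚ) * w j := by
        rw [Finset.mul_sum]
        exact Finset.sum_congr rfl fun j _ => by ring
      rw [hq]
      linarith [hw i]
    have hu : (fun j => (1/2 : ℚ) * (zq j + ε * x j)) ∈
        {x : Fin n → ℚ | ∀ i : Fin k, (∑ j, (T i j : ℚ) * x j) ≤ 0} := by
      intro i
      exact hhalf (fun j => zq j + ε * x j)
        (hmem ε (by rw [abs_of_pos hε0]) ) i
    have hv : (fun j => (1/2 : ℚ) * (zq j + (-ε) * x j)) ∈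
        {x : Fin n → ℚ | ∀ i : Fin k, (∑ j, (T i j : ℚ) * x j) ≤ 0} := by
      intro i
      exact hhalf (fun j => zq j + (-ε) * x j)
        (hmem (-ε) (by rw [abs_neg, abs_of_pos hε0])) i
    obtain ⟨a, _, hau⟩ := hray _ _ hu hv (funext fun j => by
      show (1/2 : ℚ) * (zq j + ε * x j) + (1/2 : ℚ) * (zq j + (-ε) * x j) = zq j
      ring)
    refine ⟨(2*a - 1)/ε, funext fun j => ?_⟩
    have hj := congrFun hau j
    simp only [Pi.smul_apply, smul_eq_mul] at hj
    have h2 : ε * x j = (2*a - 1) * zq j := by linarith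
    have hεne : ε ≠ 0 := ne_of_gt hε0
    show x j = ((2*a - 1)/ε) * zq j
    field_simp
    linarith [h2]
  -- the appended matrix
  set M : Matrix (Fin k ⊕ Unit) (Fin n) ℤ :=
    Matrix.fromRows T (Matrix.of fun (_ : Unit) (j : Fin n) => d j) with hM
  set P : Fin k ⊕ Unit → Prop :=
    fun p => ∀ i : Fin k, p = Sum.inl i → ∑ j, T i j * z j = 0 with hP
  haveI : Fintype {p // P p} := Fintype.ofFinite _
  set A' : Matrix {p // P p} (Fin n) ℚ := Matrix.of fun p j => ((M p.1 j : ℤ) : ℚ) with hA'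
  -- ℤ-tightness vs ℚ-tightness
  have hcast : ∀ i : Fin k, ((∑ j, T i j * z j : ℤ) : ℚ) = ∑ j, (T i j : ℚ) * zq j := by
    intro i; push_cast; rfl
  -- kernel of A' is trivial
  have hker : LinearMap.ker (Matrix.mulVecLin A') = ⊥ := by
    rw [LinearMap.ker_eq_bot']
    intro x hx
    have hx' : ∀ p : {p // P p}, ∑ j, A' p j * x j = 0 := by
      intro p
      have := congrFun hx p
      simpa [Matrix.mulVecLin, Matrix.mulVec, dotProduct] using this
    have hxt : ∀ i : Fin k, (∑ j, (T i j : ℚ) * zq j) = 0 →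
        (∑ j, (T i j : ℚ) * x j) = 0 := by
      intro i hi
      have hiZ : ∑ j, T i j * z j = 0 := by
        have : ((∑ j, T i j * z j : ℤ) : ℚ) = 0 := by rw [hcast]; exact hi
        exact_mod_cast this
      have hp : P (Sum.inl i) := by
        intro i' hi'
        obtain rfl : i = i' := by simpa using hi'
        exact hiZ
      have := hx' ⟨Sum.inl i, hp⟩
      simpa [hA', hM, Matrix.fromRows_apply_inl] using this
    obtain ⟨c, rfl⟩ := stepA x hxt
    have hp : P (Sum.inr ()) := by intro i' hi'; simp at hi'
    have hd0 := hx' ⟨Sum.inr (), hp⟩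
    have hds : ∑ j, A' (⟨Sum.inr (), hp⟩ : {p // P p}) j * (c • zq) j
        = c * ((α : ℤ) : ℚ) := by
      simp only [hA', hM, Matrix.of_apply, Matrix.fromRows_apply_inr, Pi.smul_apply,
        smul_eq_mul, hαdef, dotProduct]
      push_cast
      rw [Finset.mul_sum]
      exact Finset.sum_congr rfl fun j _ => by ring
    rw [hds] at hd0
    have hc : c = 0 := by
      have : ((α : ℤ) : ℚ) ≠ 0 := Int.cast_ne_zero.mpr hα0
      rcases mul_eq_zero.mp hd0 with h | h
      · exact h
      · exact absurd h this
    rw [hc, zero_smul]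
  -- rank of A' is n
  have hrank : A'.rank = n := by
    have h1 := LinearMap.finrank_range_add_finrank_ker (Matrix.mulVecLin A')
    rw [hker, finrank_bot, add_zero] at h1
    rw [Matrix.rank, h1, Module.finrank_pi, Fintype.card_fin]
  -- rows of A' span everything
  have hspan : Submodule.span ℚ (Set.range A') = ⊤ := by
    apply Submodule.eq_top_of_finrank_eq
    rw [show Set.range A' = Set.range A'.row from rfl, ← Matrix.rank_eq_finrank_span_row, hrank, Module.finrank_pi, Fintype.card_fin]
  -- extract a basis from the rows
  obtain ⟨b, hb_sub, hb_span, hb_ind⟩ := exists_linearIndependent ℚ (Set.range A')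
  rw [hspan] at hb_span
  haveI : Fintype b := hb_ind.setFinite.fintype
  have hcardb : Fintype.card b = n := by
    have hB := Module.finrank_eq_card_basis
      (Module.Basis.mk hb_ind (by rw [Subtype.range_coe, hb_span]))
    rw [Module.finrank_pi, Fintype.card_fin] at hB
    exact hB.symm
  set e : Fin n ≃ b := (Fintype.equivFinOfCardEq hcardb).symm with he
  have hchoose : ∀ v : b, ∃ p : {p // P p}, A' p = (v : Fin n → ℚ) := fun v => hb_sub v.2
  choose χ hχ using hchoose
  set g : Fin n → Fin k ⊕ Unit := fun i => (χ (e i)).1 with hg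
  have hginj : Function.Injective g := by
    intro i1 i2 h12
    have h1 : χ (e i1) = χ (e i2) := Subtype.ext h12
    have h3 : ((e i1 : b) : Fin n → ℚ) = ((e i2 : b) : Fin n → ℚ) := by
      rw [← hχ (e i1), ← hχ (e i2), h1]
    exact e.injective (Subtype.ext h3)
  set Bsq : Matrix (Fin n) (Fin n) ℤ := M.submatrix g id with hBsq
  -- TU gives det ∈ {-1,0,1}
  have hd' : M.IsTotallyUnimodular := hd
  have hdet01 : Bsq.det ∈ Set.range (SignType.cast : SignType → ℤ) :=
    hd' n g id hginj Function.injective_id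
  -- det is nonzero
  have hrows : ∀ i : Fin n, (fun j => ((Bsq i j : ℤ) : ℚ)) = ((e i : b) : Fin n → ℚ) := by
    intro i
    funext j
    have : A' (χ (e i)) j = ((e i : b) : Fin n → ℚ) j := congrFun (hχ (e i)) j
    simpa [hBsq, hA'] using this
  have hdetne : Bsq.det ≠ 0 := by
    intro hdet0
    have hq0 : (Bsq.map (Int.cast : ℤ → ℚ)).det = 0 := by
      rw [show Bsq.map (Int.cast : ℤ → ℚ) = (Int.castRingHom ℚ).mapMatrix Bsq from rfl,
        ← RingHom.map_det]
      simp [hdet0]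
    obtain ⟨v, hv0, hv⟩ := Matrix.exists_mulVec_eq_zero_iff.mpr hq0
    have horth : ∀ u ∈ b, dotProduct u v = 0 := by
      intro u hu
      set i : Fin n := e.symm ⟨u, hu⟩ with hi
      have hrow : (fun j => ((Bsq i j : ℤ) : ℚ)) = u := by
        rw [hrows i, hi]; simp
      have := congrFun hv i
      simp only [Matrix.mulVec, dotProduct, Matrix.map_apply, Pi.zero_apply] at this
      rw [show (0:ℚ) = (0 : Fin n → ℚ) i from rfl] at this ⊢
      calc dotProduct u v = ∑ j, u j * v j := rfl
        _ = ∑ j, ((Bsq i j : ℤ) : ℚ) * v j := by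
            refine Finset.sum_congr rfl fun j _ => ?_
            rw [← hrow]
        _ = 0 := by simpa [Matrix.mulVec, dotProduct] using congrFun hv i
    have hvv : dotProduct v v = 0 := by
      have hvmem : v ∈ Submodule.span ℚ b := by rw [hb_span]; trivial
      refine Submodule.span_induction (p := fun u _ => dotProduct u v = 0)
        (fun u hu => horth u hu) (by simp) ?_ ?_ hvmem
      · intro u w _ _ h1 h2
        rw [add_dotProduct, h1, h2, add_zero]
      · intro a u _ h1
        rw [smul_dotProduct, h1, smul_zero]
    exact hv0 (dotProduct_self_eq_zero.mp hvv)
  have hdet : Bsq.det = 1 ∨ Bsq.det = -1 := by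
    obtain ⟨s, hs⟩ := hdet01
    cases s with
    | zero => exact absurd hs.symm (by simpa using hdetne)
    | pos => left; exact hs.symm.trans (by simp)
    | neg => right; exact hs.symm.trans (by simp)
  -- compute Bsq.mulVec z
  set u0 : Fin n → ℤ := fun i => if g i = Sum.inr () then 1 else 0 with hu0
  have hBz : Bsq.mulVec z = α • u0 := by
    funext i
    have hL : Bsq.mulVec z i = ∑ j, M (g i) j * z j := by
      simp [hBsq, Matrix.mulVec, dotProduct, Matrix.submatrix_apply]
    rcases hgi : g i with i0 | u
    · have htight : ∑ j, T i0 j * z j = 0 := (χ (e i)).2 i0 hgi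
      have hval : Bsq.mulVec z i = 0 := by
        rw [hL, hgi]
        simpa [hM] using htight
      rw [hval]
      simp [hu0, hgi]
    · have hval : Bsq.mulVec z i = α := by
        rw [hL, hgi]
        simp [hM, hαdef, dotProduct]
      rw [hval]
      simp [hu0, hgi]
  have hdvd : ∀ j, α ∣ z j := by
    have h1 : (Matrix.adjugate Bsq).mulVec (Bsq.mulVec z) = Bsq.det • z := by
      rw [Matrix.mulVec_mulVec, Matrix.adjugate_mul, Matrix.smul_mulVec,
        Matrix.one_mulVec]
    rw [hBz, Matrix.mulVec_smul] at h1
    intro j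
    have hj := congrFun h1 j
    simp only [Pi.smul_apply, smul_eq_mul] at hj
    rcases hdet with h | h
    · rw [h, one_mul] at hj
      exact ⟨_, hj.symm⟩
    · rw [h] at hj
      refine ⟨-(((Matrix.adjugate Bsq).mulVec u0) j), ?_⟩
      rw [mul_neg, hj]
      ring
  have hnat : α.natAbs ∣ 1 := by
    rw [← hgcd]
    exact Finset.dvd_gcd fun j _ => Int.natAbs_dvd_natAbs.mpr (hdvd j)
  have hα1 : α = 1 ∨ α = -1 := by
    have := Nat.dvd_one.mp hnat
    rcases Int.natAbs_eq α with h | h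
    · left; rw [h, this]; rfl
    · right; rw [h, this]; rfl
  rcases hα1 with h | h
  · right; right; exact h
  · left; exact h
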